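/- Let P ∈ P_m(ℂ^{n×n}) be regular, and suppose P is Hermitian or skew-Hermitian; let S denote, correspondingly, the Hermitian or the skew-Hermitian polynomials in P_m(ℂ^{n×n}). Then for every λ ∈ ℝ and for M ∈ {F, 2}: η_M^S(λ, P) = η(λ, P). Consequently, for every ε > 0, σ_ε^S(P) ∩ ℝ = σ_ε(P) ∩ ℝ for both norms. -/

import Mathlib

set_option linter.unusedSectionVars false
set_option synthInstance.maxHeartbeats 1000000
set_option maxHeartbeats 1000000


open scoped ComplexConjugate
open Matrix

noncomputable section

variable {ι : Type*} [Fintype ι] [DecidableEq ι]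

/-- Evaluation of the matrix polynomial with coefficient list `A` at the point `z`. -/
def polyEval {m : ℕ} (A : Fin (m+1) → Matrix ι ι ℂ) (z : ℂ) : Matrix ι ι ℂ :=
  ∑ j : Fin (m+1), z ^ (j : ℕ) • A j

/-- Squared Euclidean norm of a complex vector. -/
def vecNormSq (x : ι → ℂ) : ℝ := ∑ i, ‖x i‖ ^ 2

/-- Euclidean norm of a complex vector. -/
def vecNorm (x : ι → ℂ) : ℝ := Real.sqrt (vecNormSq x)

/-- `‖(1, z, …, z^m)‖₂²`. -/
def lamNormSq (m : ℕ) (z : ℂ) : ℝ := ∑ j : Fin (m+1), ‖z ^ (j : ℕ)‖ ^ 2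

/-- Squared Frobenius norm of a matrix. -/
def frobNormSq (M : Matrix ι ι ℂ) : ℝ := ∑ i, ∑ k, ‖M i k‖ ^ 2

/-- Spectral (operator 2-) norm of a matrix. -/
def specNorm (M : Matrix ι ι ℂ) : ℝ := ‖Matrix.toEuclideanCLM (𝕜 := ℂ) M‖

/-- Frobenius norm of a matrix polynomial: `(Σ_j ‖A_j‖_F²)^{1/2}`. -/
def polyNormF {m : ℕ} (A : Fin (m+1) → Matrix ι ι ℂ) : ℝ :=
  Real.sqrt (∑ j, frobNormSq (A j))

/-- Spectral norm of a matrix polynomial: `(Σ_j ‖A_j‖₂²)^{1/2}`. -/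
def polyNorm2 {m : ℕ} (A : Fin (m+1) → Matrix ι ι ℂ) : ℝ :=
  Real.sqrt (∑ j, specNorm (A j) ^ 2)

/-- Structured backward error of `(lam, x)` as an approximate eigenpair of the matrix
polynomial `A`, with respect to the polynomial norm `N` and the structure class `S`. -/
def eta {m : ℕ} (N : (Fin (m+1) → Matrix ι ι ℂ) → ℝ)
    (S : Set (Fin (m+1) → Matrix ι ι ℂ)) (lam : ℂ) (x : ι → ℂ)
    (A : Fin (m+1) → Matrix ι ι ℂ) : ℝ :=
  sInf {t | ∃ ΔA ∈ S, (polyEval A lam + polyEval ΔA lam) *ᵥ x = 0 ∧ t = N ΔA}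

/-- A matrix polynomial is regular if `det P(z) ≠ 0` for some `z`. -/
def Regular {m : ℕ} (A : Fin (m+1) → Matrix ι ι ℂ) : Prop :=
  ∃ z : ℂ, (polyEval A z).det ≠ 0


/-- Backward error of `lam` as an approximate eigenvalue of the matrix polynomial `A`,
w.r.t. the polynomial norm `N` and the structure class `S`:
the infimum of `eta N S lam x A` over all unit vectors `x`. -/
def etaEig {m : ℕ} (N : (Fin (m+1) → Matrix ι ι ℂ) → ℝ)
    (S : Set (Fin (m+1) → Matrix ι ι ℂ)) (lam : ℂ)
    (A : Fin (m+1) → Matrix ι ι ℂ) : ℝ :=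
  sInf {t | ∃ x : ι → ℂ, star x ⬝ᵥ x = 1 ∧ t = eta N S lam x A}

/-- The class of Hermitian matrix polynomials. -/
def HermPoly {ι : Type*} [Fintype ι] [DecidableEq ι] {m : ℕ} :
    Set (Fin (m+1) → Matrix ι ι ℂ) := {B | ∀ j, (B j)ᴴ = B j}

/-- The class of skew-Hermitian matrix polynomials. -/
def SkewHermPoly {ι : Type*} [Fintype ι] [DecidableEq ι] {m : ℕ} :
    Set (Fin (m+1) → Matrix ι ι ℂ) := {B | ∀ j, (B j)ᴴ = -(B j)}





def toE (x : ι → ℂ) : EuclideanSpace ℂ ι := (WithLp.linearEquiv 2 ℂ (ι → ℂ)).symm x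

lemma toE_apply (x : ι → ℂ) (i : ι) : toE x i = x i := rfl

lemma vecNorm_eq (x : ι → ℂ) : vecNorm x = ‖toE x‖ := by
  rw [EuclideanSpace.norm_eq]; simp [vecNorm, vecNormSq, toE_apply]

lemma vecNorm_nonneg (x : ι → ℂ) : 0 ≤ vecNorm x := Real.sqrt_nonneg _

lemma vecNorm_smul (s : ℂ) (x : ι → ℂ) : vecNorm (s • x) = ‖s‖ * vecNorm x := by
  rw [vecNorm_eq, vecNorm_eq]
  rw [show toE (s • x) = s • toE x from map_smul (WithLp.linearEquiv 2 ℂ (ι → ℂ)).symm s x, norm_smul]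

lemma vecNorm_neg (x : ι → ℂ) : vecNorm (-x) = vecNorm x := by
  rw [vecNorm_eq, vecNorm_eq]
  rw [show toE (-x) = -(toE x) from map_neg (WithLp.linearEquiv 2 ℂ (ι → ℂ)).symm x, norm_neg]

lemma toE_sum {κ : Type*} (s : Finset κ) (v : κ → ι → ℂ) :
    toE (∑ j ∈ s, v j) = ∑ j ∈ s, toE (v j) := map_sum _ _ _

lemma vecNorm_sum_le {κ : Type*} (s : Finset κ) (v : κ → ι → ℂ) :
    vecNorm (∑ j ∈ s, v j) ≤ ∑ j ∈ s, vecNorm (v j) := by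
  rw [vecNorm_eq, toE_sum]
  refine (norm_sum_le _ _).trans ?_
  simp [vecNorm_eq]

lemma vecNormSq_eq_one {x : ι → ℂ} (hx : star x ⬝ᵥ x = 1) : vecNormSq x = 1 := by
  have : ((vecNormSq x : ℝ) : ℂ) = 1 := by
    rw [← hx]
    simp [vecNormSq, dotProduct, Complex.ofReal_sum]
    congr 1; ext i
    rw [show ((‖x i‖ :ℝ):ℂ)^2 = ((Complex.normSq (x i) : ℝ):ℂ) by
      rw [← Complex.sq_norm]; push_cast; ring, Complex.normSq_eq_conj_mul_self]
  exact_mod_cast this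

lemma vecNorm_eq_one {x : ι → ℂ} (hx : star x ⬝ᵥ x = 1) : vecNorm x = 1 := by
  rw [vecNorm, vecNormSq_eq_one hx, Real.sqrt_one]

lemma toE_equiv (y : EuclideanSpace ℂ ι) : toE (WithLp.equiv 2 (ι → ℂ) y) = y := rfl

lemma toEuclideanCLM_apply' (M : Matrix ι ι ℂ) (x : ι → ℂ) :
    Matrix.toEuclideanCLM (𝕜 := ℂ) M (toE x) = toE (M *ᵥ x) := by
  have h := Matrix.toEuclideanCLM_toLp (𝕜 := ℂ) M x
  simpa [Matrix.toLin'_apply, toE] using h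

lemma vecNorm_mulVec_le_spec (M : Matrix ι ι ℂ) (x : ι → ℂ) :
    vecNorm (M *ᵥ x) ≤ specNorm M * vecNorm x := by
  rw [vecNorm_eq, vecNorm_eq x, ← toEuclideanCLM_apply']
  exact ContinuousLinearMap.le_opNorm _ _

lemma specNorm_nonneg (M : Matrix ι ι ℂ) : 0 ≤ specNorm M := norm_nonneg _

lemma specNorm_le_bound (M : Matrix ι ι ℂ) {C : ℝ} (hC : 0 ≤ C)
    (h : ∀ x, vecNorm (M *ᵥ x) ≤ C * vecNorm x) : specNorm M ≤ C := by
  refine ContinuousLinearMap.opNorm_le_bound _ hC fun y => ?_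
  have := h (WithLp.equiv 2 (ι → ℂ) y)
  rwa [vecNorm_eq, vecNorm_eq, ← toEuclideanCLM_apply', toE_equiv] at this

lemma vecNormSq_nonneg (x : ι → ℂ) : 0 ≤ vecNormSq x :=
  Finset.sum_nonneg fun _ _ => sq_nonneg _

lemma frobNormSq_nonneg (M : Matrix ι ι ℂ) : 0 ≤ frobNormSq M :=
  Finset.sum_nonneg fun _ _ => Finset.sum_nonneg fun _ _ => sq_nonneg _

lemma vecNorm_mulVec_le_frob (M : Matrix ι ι ℂ) (x : ι → ℂ) :
    vecNorm (M *ᵥ x) ≤ Real.sqrt (frobNormSq M) * vecNorm x := by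
  rw [vecNorm, vecNorm, ← Real.sqrt_mul (frobNormSq_nonneg M)]
  apply Real.sqrt_le_sqrt
  rw [frobNormSq, Finset.sum_mul]
  refine Finset.sum_le_sum fun i _ => ?_
  calc ‖(M *ᵥ x) i‖ ^ 2 ≤ (∑ k, ‖M i k‖ * ‖x k‖) ^ 2 := by
        apply pow_le_pow_left₀ (norm_nonneg _)
        exact (norm_sum_le _ _).trans_eq (by simp [Matrix.mulVec, dotProduct])
    _ ≤ (∑ k, ‖M i k‖ ^ 2) * ∑ k, ‖x k‖ ^ 2 :=
        Finset.sum_mul_sq_le_sq_mul_sq _ _ _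
    _ = (∑ k, ‖M i k‖ ^ 2) * vecNormSq x := rfl

lemma one_le_lamNormSq (m : ℕ) (z : ℂ) : 1 ≤ lamNormSq m z := by
  have h := Finset.single_le_sum (f := fun j : Fin (m+1) => ‖z ^ (j : ℕ)‖ ^ 2)
    (fun j _ => sq_nonneg _) (Finset.mem_univ 0)
  simpa [lamNormSq] using h

lemma lamNormSq_pos (m : ℕ) (z : ℂ) : 0 < lamNormSq m z :=
  lt_of_lt_of_le one_pos (one_le_lamNormSq m z)

lemma sqrt_lamNormSq_pos (m : ℕ) (z : ℂ) : 0 < Real.sqrt (lamNormSq m z) :=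
  Real.sqrt_pos.2 (lamNormSq_pos m z)

lemma lamNormSq_real (m : ℕ) (lam : ℝ) :
    lamNormSq m (lam : ℂ) = ∑ j : Fin (m+1), (lam ^ (j : ℕ)) ^ 2 := by
  unfold lamNormSq
  congr 1; ext j
  rw [← Complex.ofReal_pow, Complex.norm_real, Real.norm_eq_abs, sq_abs]

lemma vecMulVec_mulVec (u v x : ι → ℂ) : vecMulVec u v *ᵥ x = (v ⬝ᵥ x) • u := by
  ext i
  simp only [Matrix.mulVec, dotProduct, Matrix.vecMulVec_apply, Pi.smul_apply,
    smul_eq_mul, Finset.sum_mul]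
  exact Finset.sum_congr rfl fun k _ => by ring

lemma polyEval_smul_fun {m : ℕ} (f : Fin (m+1) → ℂ) (G : Matrix ι ι ℂ) (z : ℂ) :
    polyEval (fun j => f j • G) z = (∑ j : Fin (m+1), z ^ (j : ℕ) * f j) • G := by
  simp [polyEval, smul_smul, Finset.sum_smul]

lemma frobNormSq_smul (s : ℂ) (M : Matrix ι ι ℂ) :
    frobNormSq (s • M) = ‖s‖ ^ 2 * frobNormSq M := by
  simp [frobNormSq, Finset.mul_sum, norm_mul, mul_pow]

lemma vecNormSq_star (y : ι → ℂ) : vecNormSq (star y) = vecNormSq y := by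
  simp [vecNormSq]

lemma frobNormSq_vecMulVec (u v : ι → ℂ) :
    frobNormSq (vecMulVec u v) = vecNormSq u * vecNormSq v := by
  simp [frobNormSq, vecNormSq, Matrix.vecMulVec_apply, norm_mul, mul_pow, ← Finset.sum_mul,
    ← Finset.mul_sum]

lemma dot_norm_le (y x : ι → ℂ) : ‖star y ⬝ᵥ x‖ ≤ vecNorm y * vecNorm x := by
  have h : star y ⬝ᵥ x = (inner ℂ (toE y) (toE x) : ℂ) := by
    rw [dotProduct_comm]; rfl
  rw [h, vecNorm_eq, vecNorm_eq]
  exact norm_inner_le_norm _ _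

lemma specNorm_smul (s : ℂ) (M : Matrix ι ι ℂ) :
    specNorm (s • M) = ‖s‖ * specNorm M := by
  unfold specNorm
  rw [show Matrix.toEuclideanCLM (𝕜 := ℂ) (s • M) = s • Matrix.toEuclideanCLM (𝕜 := ℂ) M from
    map_smul (Matrix.toEuclideanCLM (𝕜 := ℂ) : Matrix ι ι ℂ ≃⋆ₐ[ℂ] _) s M]
  exact norm_smul (β := EuclideanSpace ℂ ι →L[ℂ] EuclideanSpace ℂ ι) s _

lemma specNorm_vecMulVec_star_le (y : ι → ℂ) :
    specNorm (vecMulVec y (star y)) ≤ vecNorm y * vecNorm y := by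
  refine specNorm_le_bound _ (mul_nonneg (vecNorm_nonneg y) (vecNorm_nonneg y)) fun x => ?_
  rw [_root_.vecMulVec_mulVec, vecNorm_smul]
  calc ‖star y ⬝ᵥ x‖ * vecNorm y ≤ (vecNorm y * vecNorm x) * vecNorm y :=
        mul_le_mul_of_nonneg_right (dot_norm_le y x) (vecNorm_nonneg y)
    _ = vecNorm y * vecNorm y * vecNorm x := by ring

lemma vecMulVec_star_conjTranspose (y : ι → ℂ) :
    (vecMulVec y (star y))ᴴ = vecMulVec y (star y) := by
  ext i k
  simp [Matrix.conjTranspose_apply, Matrix.vecMulVec_apply, mul_comm]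

lemma polyEval_mulVec_le {m : ℕ} (ΔA : Fin (m+1) → Matrix ι ι ℂ) (z : ℂ) (x : ι → ℂ)
    (g : Fin (m+1) → ℝ) (hg : ∀ j, vecNorm (ΔA j *ᵥ x) ≤ g j * vecNorm x) :
    vecNorm (polyEval ΔA z *ᵥ x) ≤
      Real.sqrt (lamNormSq m z) * Real.sqrt (∑ j, g j ^ 2) * vecNorm x := by
  have h1 : polyEval ΔA z *ᵥ x = ∑ j : Fin (m+1), z ^ (j : ℕ) • (ΔA j *ᵥ x) := by
    ext i
    simp only [polyEval, Matrix.mulVec, dotProduct, Finset.sum_apply, Matrix.sum_apply,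
      Matrix.smul_apply, smul_eq_mul, Pi.smul_apply, Finset.sum_mul, Finset.mul_sum]
    rw [Finset.sum_comm]
    exact Finset.sum_congr rfl fun j _ => Finset.sum_congr rfl fun k _ => by ring
  have h2 : (∑ j : Fin (m+1), ‖z ^ (j : ℕ)‖ * g j) ≤
      Real.sqrt (lamNormSq m z) * Real.sqrt (∑ j, g j ^ 2) := by
    have hcs := Finset.sum_mul_sq_le_sq_mul_sq Finset.univ (fun j : Fin (m+1) => ‖z ^ (j : ℕ)‖) g
    calc (∑ j : Fin (m+1), ‖z ^ (j : ℕ)‖ * g j)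
        ≤ |∑ j : Fin (m+1), ‖z ^ (j : ℕ)‖ * g j| := le_abs_self _
      _ = Real.sqrt ((∑ j : Fin (m+1), ‖z ^ (j : ℕ)‖ * g j) ^ 2) :=
          (Real.sqrt_sq_eq_abs _).symm
      _ ≤ Real.sqrt (lamNormSq m z * ∑ j, g j ^ 2) := Real.sqrt_le_sqrt hcs
      _ = Real.sqrt (lamNormSq m z) * Real.sqrt (∑ j, g j ^ 2) :=
          Real.sqrt_mul (le_of_lt (lamNormSq_pos m z)) _
  rw [h1]
  calc vecNorm (∑ j : Fin (m+1), z ^ (j : ℕ) • (ΔA j *ᵥ x))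
      ≤ ∑ j : Fin (m+1), vecNorm (z ^ (j : ℕ) • (ΔA j *ᵥ x)) := vecNorm_sum_le _ _
    _ = ∑ j : Fin (m+1), ‖z ^ (j : ℕ)‖ * vecNorm (ΔA j *ᵥ x) := by
        simp [vecNorm_smul]
    _ ≤ ∑ j : Fin (m+1), ‖z ^ (j : ℕ)‖ * (g j * vecNorm x) :=
        Finset.sum_le_sum fun j _ => mul_le_mul_of_nonneg_left (hg j) (norm_nonneg _)
    _ = (∑ j : Fin (m+1), ‖z ^ (j : ℕ)‖ * g j) * vecNorm x := by
        rw [Finset.sum_mul]; exact Finset.sum_congr rfl fun j _ => by ring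
    _ ≤ Real.sqrt (lamNormSq m z) * Real.sqrt (∑ j, g j ^ 2) * vecNorm x :=
        mul_le_mul_of_nonneg_right h2 (vecNorm_nonneg x)

lemma euclid_normSq (w : EuclideanSpace ℂ ι) : ‖w‖ ^ 2 = ∑ i, ‖w i‖ ^ 2 := by
  rw [EuclideanSpace.norm_eq, Real.sq_sqrt]
  exact Finset.sum_nonneg fun _ _ => sq_nonneg _

lemma herm_exists_min_eig {n : ℕ} (hn : 0 < n) (H : Matrix (Fin n) (Fin n) ℂ)
    (hH : H.IsHermitian) :
    ∃ μ : ℝ, ∃ y : Fin n → ℂ, star y ⬝ᵥ y = 1 ∧ H *ᵥ y = (μ : ℂ) • y ∧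
      ∀ x : Fin n → ℂ, |μ| * vecNorm x ≤ vecNorm (H *ᵥ x) := by
  have hne : Nonempty (Fin n) := ⟨⟨0, hn⟩⟩
  obtain ⟨i₀, -, hi₀⟩ := Finset.exists_min_image Finset.univ (fun i => |hH.eigenvalues i|)
    ⟨Classical.arbitrary (Fin n), Finset.mem_univ _⟩
  set B := hH.eigenvectorBasis with hB
  set ev := hH.eigenvalues with hev
  refine ⟨ev i₀, ⇑(B i₀), ?_, ?_, ?_⟩
  · have h1 : (inner ℂ (B i₀) (B i₀) : ℂ) = 1 := by
      rw [inner_self_eq_norm_sq_to_K, B.orthonormal.1 i₀]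
      norm_num
    rw [← h1, EuclideanSpace.inner_eq_star_dotProduct, dotProduct_comm]
  · rw [hH.mulVec_eigenvectorBasis i₀]
    exact RCLike.real_smul_eq_coe_smul (K := ℂ) _ _
  · intro x
    have key : ∀ i, B.repr (toE (H *ᵥ x)) i = (ev i : ℂ) * B.repr (toE x) i := by
      intro i
      rw [B.repr_apply_apply, B.repr_apply_apply]
      rw [EuclideanSpace.inner_eq_star_dotProduct, EuclideanSpace.inner_eq_star_dotProduct]
      have e1 : (toE (H *ᵥ x)).ofLp = H *ᵥ x := rfl
      have e2 : (toE x).ofLp = x := rfl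
      rw [e1, e2, dotProduct_comm, dotProduct_comm x]
      have hstar : star ((B i).ofLp) ᵥ* H
          = (ev i : ℂ) • star ((B i).ofLp) := by
        have h3 : star (H *ᵥ ⇑(B i)) = star (⇑(B i)) ᵥ* Hᴴ := Matrix.star_mulVec H _
        rw [hH] at h3
        rw [show ((B i).ofLp) = ⇑(B i) from rfl, ← h3,
          hH.mulVec_eigenvectorBasis i]
        ext k
        simp [Complex.real_smul, Pi.smul_apply, hB, hev]
      rw [Matrix.dotProduct_mulVec, hstar, smul_dotProduct]
      simp
    have hnormsq : vecNormSq (H *ᵥ x) = ∑ i, ‖(ev i : ℂ) * B.repr (toE x) i‖ ^ 2 := by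
      have : vecNormSq (H *ᵥ x) = ‖toE (H *ᵥ x)‖ ^ 2 := by
        rw [euclid_normSq]; rfl
      rw [this, ← B.repr.norm_map (toE (H *ᵥ x)), euclid_normSq]
      exact Finset.sum_congr rfl fun i _ => by rw [key i]
    have hxsq : vecNormSq x = ∑ i, ‖B.repr (toE x) i‖ ^ 2 := by
      have : vecNormSq x = ‖toE x‖ ^ 2 := by rw [euclid_normSq]; rfl
      rw [this, ← B.repr.norm_map (toE x), euclid_normSq]
    have hineq : |ev i₀| ^ 2 * vecNormSq x ≤ vecNormSq (H *ᵥ x) := by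
      rw [hnormsq, hxsq, Finset.mul_sum]
      refine Finset.sum_le_sum fun i _ => ?_
      rw [norm_mul, mul_pow]
      apply mul_le_mul_of_nonneg_right _ (sq_nonneg _)
      have h4 : |ev i₀| ≤ |ev i| := hi₀ i (Finset.mem_univ i)
      have h5 : ‖(ev i : ℂ)‖ = |ev i| := by
        rw [Complex.norm_real, Real.norm_eq_abs]
      rw [h5]
      exact pow_le_pow_left₀ (abs_nonneg _) h4 2
    calc |ev i₀| * vecNorm x = Real.sqrt (|ev i₀| ^ 2 * vecNormSq x) := by
          rw [Real.sqrt_mul (sq_nonneg _), Real.sqrt_sq_eq_abs, abs_abs, vecNorm]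
      _ ≤ Real.sqrt (vecNormSq (H *ᵥ x)) := Real.sqrt_le_sqrt hineq
      _ = vecNorm (H *ᵥ x) := rfl

lemma sum_coeff_one (m : ℕ) (lam : ℝ) :
    (∑ j : Fin (m+1), (lam:ℂ) ^ (j:ℕ) * (((lam ^ (j:ℕ) / lamNormSq m (lam:ℂ)) : ℝ) : ℂ)) = 1 := by
  have hL := lamNormSq_pos m (lam:ℂ)
  have h1 : (∑ j : Fin (m+1), (lam:ℂ) ^ (j:ℕ) * (((lam ^ (j:ℕ) / lamNormSq m (lam:ℂ)) : ℝ) : ℂ))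
      = (((∑ j : Fin (m+1), (lam ^ (j:ℕ))^2) / lamNormSq m (lam:ℂ) : ℝ) : ℂ) := by
    push_cast
    rw [Finset.sum_div]
    exact Finset.sum_congr rfl fun j _ => by ring
  rw [h1, ← lamNormSq_real m lam, div_self (ne_of_gt hL), Complex.ofReal_one]

lemma conj_quadForm {n : ℕ} (H : Matrix (Fin n) (Fin n) ℂ) (x : Fin n → ℂ) :
    (starRingEnd ℂ) (star x ⬝ᵥ (H *ᵥ x)) = star x ⬝ᵥ (Hᴴ *ᵥ x) := by
  have h1 : (starRingEnd ℂ) (star x ⬝ᵥ (H *ᵥ x)) = star (H *ᵥ x) ⬝ᵥ star (star x) :=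
    (Matrix.star_dotProduct_star _ _).symm
  rw [h1, star_star, Matrix.star_mulVec, ← Matrix.dotProduct_mulVec]

lemma vecMulVec_star_conjT (u v : ι → ℂ) :
    (vecMulVec u (star v))ᴴ = vecMulVec v (star u) := by
  ext i k
  simp [Matrix.conjTranspose_apply, Matrix.vecMulVec_apply, mul_comm]

lemma feas_witness {n m : ℕ} (A : Fin (m+1) → Matrix (Fin n) (Fin n) ℂ) (lam : ℝ)
    (e : ℝ) (he : e = 1 ∨ e = -1)
    (x : Fin n → ℂ) (hx : star x ⬝ᵥ x = 1)
    (hc : (starRingEnd ℂ) (star x ⬝ᵥ (polyEval A (lam:ℂ) *ᵥ x))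
       = -(e:ℂ) * (star x ⬝ᵥ (polyEval A (lam:ℂ) *ᵥ x))) :
    ∃ ΔA : Fin (m+1) → Matrix (Fin n) (Fin n) ℂ,
      (∀ j, (ΔA j)ᴴ = (-(e:ℂ)) • ΔA j) ∧
      (polyEval A (lam:ℂ) + polyEval ΔA (lam:ℂ)) *ᵥ x = 0 := by
  set r := polyEval A (lam:ℂ) *ᵥ x with hr
  set c := star x ⬝ᵥ r with hcdef
  have hee : (e:ℂ) * (e:ℂ) = 1 := by
    rcases he with rfl | rfl <;> norm_num
  set G : Matrix (Fin n) (Fin n) ℂ :=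
    (-(1:ℂ)) • vecMulVec r (star x) + (e:ℂ) • vecMulVec x (star r)
      + c • vecMulVec x (star x) with hG
  have hGconj : Gᴴ = (-(e:ℂ)) • G := by
    rw [hG]
    ext i k
    simp only [Matrix.add_apply, Matrix.smul_apply, Matrix.conjTranspose_apply,
      Matrix.vecMulVec_apply, Pi.star_apply, smul_eq_mul, RCLike.star_def, map_add,
      _root_.map_mul, map_neg, _root_.map_one, Complex.conj_conj, Complex.conj_ofReal]
    have hcc : (starRingEnd ℂ) c = -(e:ℂ) * c := hc
    linear_combination (x i * (starRingEnd ℂ) (x k)) * hcc +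
      (x i * (starRingEnd ℂ) (r k)) * hee
  have hrx : star r ⬝ᵥ x = -(e:ℂ) * c := by
    have : star r ⬝ᵥ x = (starRingEnd ℂ) c := by
      rw [hcdef, Matrix.star_dotProduct]
      simp
    rw [this, hc]
  have hGx : G *ᵥ x = -r := by
    rw [hG]
    rw [Matrix.add_mulVec, Matrix.add_mulVec]
    rw [Matrix.smul_mulVec, Matrix.smul_mulVec, Matrix.smul_mulVec,
      _root_.vecMulVec_mulVec, _root_.vecMulVec_mulVec, _root_.vecMulVec_mulVec, hx, hrx]
    ext i
    simp only [Pi.add_apply, Pi.smul_apply, Pi.neg_apply, smul_eq_mul, one_smul]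
    linear_combination (-(c * x i)) * hee
  refine ⟨fun j : Fin (m+1) => (((lam ^ (j:ℕ) / lamNormSq m (lam:ℂ)) : ℝ) : ℂ) • G, fun j => ?_, ?_⟩
  · rw [Matrix.conjTranspose_smul, hGconj, RCLike.star_def, Complex.conj_ofReal, smul_comm]
  · have heval : polyEval (fun j : Fin (m+1) => (((lam ^ (j:ℕ) / lamNormSq m (lam:ℂ)) : ℝ) : ℂ) • G) (lam:ℂ)
        = G := by
      rw [polyEval_smul_fun, sum_coeff_one, one_smul]
    rw [Matrix.add_mulVec, heval, hGx, ← hr]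
    simp

lemma opt_witness {n m : ℕ} (A : Fin (m+1) → Matrix (Fin n) (Fin n) ℂ) (lam : ℝ)
    (y : Fin n → ℂ) (hy : star y ⬝ᵥ y = 1) (c : ℂ)
    (heig : polyEval A (lam:ℂ) *ᵥ y = c • y) :
    ∃ ΔA : Fin (m+1) → Matrix (Fin n) (Fin n) ℂ,
      (∀ j, ΔA j = (-(((lam ^ (j:ℕ) / lamNormSq m (lam:ℂ)) : ℝ) : ℂ) * c)
        • vecMulVec y (star y)) ∧
      (polyEval A (lam:ℂ) + polyEval ΔA (lam:ℂ)) *ᵥ y = 0 ∧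
      polyNormF ΔA ≤ ‖c‖ / Real.sqrt (lamNormSq m (lam:ℂ)) ∧
      polyNorm2 ΔA ≤ ‖c‖ / Real.sqrt (lamNormSq m (lam:ℂ)) := by
  set L := lamNormSq m (lam:ℂ) with hLdef
  have hL := lamNormSq_pos m (lam:ℂ)
  set M := vecMulVec y (star y) with hM
  set f : Fin (m+1) → ℂ := fun j => -(((lam ^ (j:ℕ) / L) : ℝ) : ℂ) * c with hf
  have hysq : vecNormSq y = 1 := vecNormSq_eq_one hy
  have hynorm : vecNorm y = 1 := vecNorm_eq_one hy
  have hfnorm : ∀ j, ‖f j‖ ^ 2 = (lam ^ (j:ℕ) / L) ^ 2 * ‖c‖ ^ 2 := by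
    intro j
    rw [hf]
    simp only [norm_mul, norm_neg, Complex.norm_real, Real.norm_eq_abs]
    rw [mul_pow, sq_abs]
  have hsum : ∑ j : Fin (m+1), (lam ^ (j:ℕ) / L) ^ 2 = 1 / L := by
    have : ∀ j : Fin (m+1), (lam ^ (j:ℕ) / L) ^ 2 = (lam ^ (j:ℕ)) ^ 2 / L ^ 2 := fun j =>
      div_pow _ _ 2
    rw [Finset.sum_congr rfl fun j _ => this j, ← Finset.sum_div, ← lamNormSq_real m lam,
      ← hLdef]
    rw [sq]
    field_simp
  have hnormsum : ∑ j : Fin (m+1), ‖f j‖ ^ 2 = ‖c‖ ^ 2 / L := by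
    rw [Finset.sum_congr rfl fun j _ => hfnorm j, ← Finset.sum_mul, hsum]
    ring
  have hsqrt : Real.sqrt (‖c‖ ^ 2 / L) = ‖c‖ / Real.sqrt L := by
    rw [Real.sqrt_div (sq_nonneg _), Real.sqrt_sq (norm_nonneg _)]
  refine ⟨fun j => f j • M, fun j => rfl, ?_, ?_, ?_⟩
  · have heval : polyEval (fun j : Fin (m+1) => f j • M) (lam:ℂ) = (-c) • M := by
      rw [polyEval_smul_fun]
      congr 1
      have h2 : (∑ j : Fin (m+1), (lam:ℂ) ^ (j:ℕ) * f j)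
          = (∑ j : Fin (m+1), (lam:ℂ) ^ (j:ℕ) * (((lam ^ (j:ℕ) / L) : ℝ) : ℂ)) * (-c) := by
        rw [Finset.sum_mul]
        exact Finset.sum_congr rfl fun j _ => by rw [hf]; ring
      rw [h2, hLdef, sum_coeff_one, one_mul]
    rw [Matrix.add_mulVec, heval, heig, Matrix.smul_mulVec, hM, _root_.vecMulVec_mulVec, hy]
    ext i
    simp
  · rw [polyNormF]
    have : ∀ j : Fin (m+1), frobNormSq (f j • M) = ‖f j‖ ^ 2 := by
      intro j
      rw [frobNormSq_smul, hM, frobNormSq_vecMulVec, vecNormSq_star, hysq]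
      ring
    rw [Finset.sum_congr rfl fun j _ => this j, hnormsum, hsqrt]
  · rw [polyNorm2]
    have hterm : ∀ j : Fin (m+1), specNorm (f j • M) ^ 2 ≤ ‖f j‖ ^ 2 := by
      intro j
      rw [specNorm_smul]
      have h1 : specNorm M ≤ 1 := by
        have := specNorm_vecMulVec_star_le y
        rwa [hynorm, one_mul, ← hM] at this
      calc (‖f j‖ * specNorm M) ^ 2 = ‖f j‖ ^ 2 * specNorm M ^ 2 := by ring
        _ ≤ ‖f j‖ ^ 2 * 1 := by
            apply mul_le_mul_of_nonneg_left _ (sq_nonneg _)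
            calc specNorm M ^ 2 ≤ 1 ^ 2 :=
              pow_le_pow_left₀ (specNorm_nonneg M) h1 2
              _ = 1 := one_pow 2
        _ = ‖f j‖ ^ 2 := mul_one _
    calc Real.sqrt (∑ j, specNorm (f j • M) ^ 2) ≤ Real.sqrt (∑ j, ‖f j‖ ^ 2) :=
          Real.sqrt_le_sqrt (Finset.sum_le_sum fun j _ => hterm j)
      _ = ‖c‖ / Real.sqrt L := by rw [hnormsum, hsqrt]

lemma univ_feas {n m : ℕ} (A : Fin (m+1) → Matrix (Fin n) (Fin n) ℂ) (lam : ℝ)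
    (x : Fin n → ℂ) (hx : star x ⬝ᵥ x = 1) :
    ∃ ΔA : Fin (m+1) → Matrix (Fin n) (Fin n) ℂ,
      (polyEval A (lam:ℂ) + polyEval ΔA (lam:ℂ)) *ᵥ x = 0 := by
  set r := polyEval A (lam:ℂ) *ᵥ x with hr
  refine ⟨fun j : Fin (m+1) => (((lam ^ (j:ℕ) / lamNormSq m (lam:ℂ)) : ℝ) : ℂ)
    • ((-(1:ℂ)) • vecMulVec r (star x)), ?_⟩
  have heval : polyEval (fun j : Fin (m+1) => (((lam ^ (j:ℕ) / lamNormSq m (lam:ℂ)) : ℝ) : ℂ)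
      • ((-(1:ℂ)) • vecMulVec r (star x))) (lam:ℂ) = (-(1:ℂ)) • vecMulVec r (star x) := by
    rw [polyEval_smul_fun, sum_coeff_one, one_smul]
  rw [Matrix.add_mulVec, heval, Matrix.smul_mulVec, _root_.vecMulVec_mulVec, hx, ← hr]
  ext i
  simp

lemma eta_nonneg {n m : ℕ} (N : (Fin (m+1) → Matrix (Fin n) (Fin n) ℂ) → ℝ)
    (hN0 : ∀ B, 0 ≤ N B) (S : Set (Fin (m+1) → Matrix (Fin n) (Fin n) ℂ)) (z : ℂ)
    (x : Fin n → ℂ) (A : Fin (m+1) → Matrix (Fin n) (Fin n) ℂ) :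
    0 ≤ eta N S z x A :=
  Real.sInf_nonneg fun t ⟨ΔA, _, _, ht⟩ => ht ▸ hN0 ΔA

lemma eta_bdd {n m : ℕ} (N : (Fin (m+1) → Matrix (Fin n) (Fin n) ℂ) → ℝ)
    (hN0 : ∀ B, 0 ≤ N B) (S : Set (Fin (m+1) → Matrix (Fin n) (Fin n) ℂ)) (z : ℂ)
    (x : Fin n → ℂ) (A : Fin (m+1) → Matrix (Fin n) (Fin n) ℂ) :
    BddBelow {t | ∃ ΔA ∈ S, (polyEval A z + polyEval ΔA z) *ᵥ x = 0 ∧ t = N ΔA} :=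
  ⟨0, fun t ⟨ΔA, _, _, ht⟩ => ht ▸ hN0 ΔA⟩

lemma etaEig_bdd {n m : ℕ} (N : (Fin (m+1) → Matrix (Fin n) (Fin n) ℂ) → ℝ)
    (hN0 : ∀ B, 0 ≤ N B) (S : Set (Fin (m+1) → Matrix (Fin n) (Fin n) ℂ)) (z : ℂ)
    (A : Fin (m+1) → Matrix (Fin n) (Fin n) ℂ) :
    BddBelow {t | ∃ x : Fin n → ℂ, star x ⬝ᵥ x = 1 ∧ t = eta N S z x A} :=
  ⟨0, fun t ⟨x, _, ht⟩ => ht ▸ eta_nonneg N hN0 S z x A⟩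

lemma master {n m : ℕ} (A : Fin (m+1) → Matrix (Fin n) (Fin n) ℂ) (lam : ℝ)
    (S : Set (Fin (m+1) → Matrix (Fin n) (Fin n) ℂ))
    (N : (Fin (m+1) → Matrix (Fin n) (Fin n) ℂ) → ℝ)
    (hN0 : ∀ B, 0 ≤ N B)
    (hNbound : ∀ (B : Fin (m+1) → Matrix (Fin n) (Fin n) ℂ) (x : Fin n → ℂ),
      vecNorm (polyEval B (lam:ℂ) *ᵥ x) ≤ Real.sqrt (lamNormSq m (lam:ℂ)) * N B * vecNorm x)
    (mu : ℝ)
    (hlow : ∀ x, mu * vecNorm x ≤ vecNorm (polyEval A (lam:ℂ) *ᵥ x))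
    (hopt : ∃ y, star y ⬝ᵥ y = 1 ∧ ∃ ΔA ∈ S,
      (polyEval A (lam:ℂ) + polyEval ΔA (lam:ℂ)) *ᵥ y = 0 ∧
      N ΔA ≤ mu / Real.sqrt (lamNormSq m (lam:ℂ)))
    (hfeas : ∀ x, star x ⬝ᵥ x = 1 → ∃ ΔA ∈ S,
      (polyEval A (lam:ℂ) + polyEval ΔA (lam:ℂ)) *ᵥ x = 0) :
    etaEig N S (lam:ℂ) A = etaEig N Set.univ (lam:ℂ) A := by
  obtain ⟨y, hy, ΔAopt, hmem, hker, hbound⟩ := hopt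
  have hL := sqrt_lamNormSq_pos m (lam:ℂ)
  apply le_antisymm
  · -- structured ≤ unstructured
    have h1 : etaEig N S (lam:ℂ) A ≤ mu / Real.sqrt (lamNormSq m (lam:ℂ)) := by
      have h2 : etaEig N S (lam:ℂ) A ≤ eta N S (lam:ℂ) y A :=
        csInf_le (etaEig_bdd N hN0 S _ A) ⟨y, hy, rfl⟩
      have h3 : eta N S (lam:ℂ) y A ≤ N ΔAopt :=
        csInf_le (eta_bdd N hN0 S _ y A) ⟨ΔAopt, hmem, hker, rfl⟩
      exact h2.trans (h3.trans hbound)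
    refine h1.trans ?_
    refine le_csInf ⟨eta N Set.univ (lam:ℂ) y A, y, hy, rfl⟩ ?_
    rintro t ⟨x, hx, rfl⟩
    obtain ⟨ΔAu, hkeru⟩ := univ_feas A lam x hx
    refine le_csInf ⟨N ΔAu, ΔAu, Set.mem_univ _, hkeru, rfl⟩ ?_
    rintro t' ⟨ΔA, -, hker', rfl⟩
    rw [div_le_iff₀ hL]
    have hxn : vecNorm x = 1 := vecNorm_eq_one hx
    have hkey : vecNorm (polyEval A (lam:ℂ) *ᵥ x) = vecNorm (polyEval ΔA (lam:ℂ) *ᵥ x) := by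
      have : polyEval A (lam:ℂ) *ᵥ x = -(polyEval ΔA (lam:ℂ) *ᵥ x) := by
        rw [Matrix.add_mulVec] at hker'
        exact eq_neg_of_add_eq_zero_left hker'
      rw [this, vecNorm_neg]
    calc mu = mu * vecNorm x := by rw [hxn, mul_one]
      _ ≤ vecNorm (polyEval A (lam:ℂ) *ᵥ x) := hlow x
      _ = vecNorm (polyEval ΔA (lam:ℂ) *ᵥ x) := hkey
      _ ≤ Real.sqrt (lamNormSq m (lam:ℂ)) * N ΔA * vecNorm x := hNbound ΔA x
      _ = N ΔA * Real.sqrt (lamNormSq m (lam:ℂ)) := by rw [hxn]; ring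
  · -- unstructured ≤ structured
    refine le_csInf ⟨eta N S (lam:ℂ) y A, y, hy, rfl⟩ ?_
    rintro t ⟨x, hx, rfl⟩
    have h2 : etaEig N Set.univ (lam:ℂ) A ≤ eta N Set.univ (lam:ℂ) x A :=
      csInf_le (etaEig_bdd N hN0 Set.univ _ A) ⟨x, hx, rfl⟩
    refine h2.trans ?_
    obtain ⟨ΔAs, hmems, hkers⟩ := hfeas x hx
    refine le_csInf ⟨N ΔAs, ΔAs, hmems, hkers, rfl⟩ ?_
    rintro t' ⟨ΔA, hΔ, hker', rfl⟩
    exact csInf_le (eta_bdd N hN0 Set.univ _ x A) ⟨ΔA, Set.mem_univ _, hker', rfl⟩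

lemma polyEval_herm_of {n m : ℕ} (A : Fin (m+1) → Matrix (Fin n) (Fin n) ℂ)
    (hA : ∀ j, (A j)ᴴ = A j) (lam : ℝ) : (polyEval A (lam:ℂ))ᴴ = polyEval A (lam:ℂ) := by
  rw [polyEval, Matrix.conjTranspose_sum]
  refine Finset.sum_congr rfl fun j _ => ?_
  rw [Matrix.conjTranspose_smul, hA j, ← Complex.ofReal_pow, RCLike.star_def,
    Complex.conj_ofReal]

lemma polyEval_skew_of {n m : ℕ} (A : Fin (m+1) → Matrix (Fin n) (Fin n) ℂ)
    (hA : ∀ j, (A j)ᴴ = -(A j)) (lam : ℝ) : (polyEval A (lam:ℂ))ᴴ = -polyEval A (lam:ℂ) := by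
  rw [polyEval, Matrix.conjTranspose_sum, ← Finset.sum_neg_distrib]
  refine Finset.sum_congr rfl fun j _ => ?_
  rw [Matrix.conjTranspose_smul, hA j, ← Complex.ofReal_pow, RCLike.star_def,
    Complex.conj_ofReal, smul_neg]

lemma bound_F {n m : ℕ} (lam : ℝ) (B : Fin (m+1) → Matrix (Fin n) (Fin n) ℂ) (x : Fin n → ℂ) :
    vecNorm (polyEval B (lam:ℂ) *ᵥ x) ≤
      Real.sqrt (lamNormSq m (lam:ℂ)) * polyNormF B * vecNorm x := by
  have h := polyEval_mulVec_le B (lam:ℂ) x (fun j => Real.sqrt (frobNormSq (B j)))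
    (fun j => vecNorm_mulVec_le_frob (B j) x)
  have he : (∑ j : Fin (m+1), Real.sqrt (frobNormSq (B j)) ^ 2) = ∑ j, frobNormSq (B j) :=
    Finset.sum_congr rfl fun j _ => Real.sq_sqrt (frobNormSq_nonneg _)
  rwa [he, ← polyNormF] at h

lemma bound_2 {n m : ℕ} (lam : ℝ) (B : Fin (m+1) → Matrix (Fin n) (Fin n) ℂ) (x : Fin n → ℂ) :
    vecNorm (polyEval B (lam:ℂ) *ᵥ x) ≤
      Real.sqrt (lamNormSq m (lam:ℂ)) * polyNorm2 B * vecNorm x := by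
  have h := polyEval_mulVec_le B (lam:ℂ) x (fun j => specNorm (B j))
    (fun j => vecNorm_mulVec_le_spec (B j) x)
  rwa [← polyNorm2] at h

lemma polyNormF_nonneg {n m : ℕ} (B : Fin (m+1) → Matrix (Fin n) (Fin n) ℂ) :
    0 ≤ polyNormF B := Real.sqrt_nonneg _

lemma polyNorm2_nonneg {n m : ℕ} (B : Fin (m+1) → Matrix (Fin n) (Fin n) ℂ) :
    0 ≤ polyNorm2 B := Real.sqrt_nonneg _

lemma exists_unit {n : ℕ} (hn : 0 < n) : ∃ x : Fin n → ℂ, star x ⬝ᵥ x = 1 := by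
  refine ⟨Pi.single ⟨0, hn⟩ 1, ?_⟩
  simp [dotProduct, Pi.single_apply]

lemma etaEig_n0 {m : ℕ} (N : (Fin (0+1+0) → Matrix (Fin 0) (Fin 0) ℂ) → ℝ) : True := trivial

lemma etaEig_zero {m : ℕ} (N : (Fin (m+1) → Matrix (Fin 0) (Fin 0) ℂ) → ℝ)
    (S : Set (Fin (m+1) → Matrix (Fin 0) (Fin 0) ℂ)) (z : ℂ)
    (A : Fin (m+1) → Matrix (Fin 0) (Fin 0) ℂ) : etaEig N S z A = 0 := by
  have h : {t | ∃ x : Fin 0 → ℂ, star x ⬝ᵥ x = 1 ∧ t = eta N S z x A} = ∅ := by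
    refine Set.eq_empty_of_forall_notMem fun t ⟨x, hx, _⟩ => ?_
    have : star x ⬝ᵥ x = 0 := by simp [dotProduct]
    rw [this] at hx
    exact one_ne_zero hx.symm
  rw [etaEig, h, Real.sInf_empty]

lemma herm_main {n m : ℕ} (A : Fin (m+1) → Matrix (Fin n) (Fin n) ℂ)
    (hA : A ∈ HermPoly) (lam : ℝ) :
    etaEig polyNormF HermPoly (lam:ℂ) A = etaEig polyNormF Set.univ (lam:ℂ) A ∧
    etaEig polyNorm2 HermPoly (lam:ℂ) A = etaEig polyNorm2 Set.univ (lam:ℂ) A := by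
  rcases Nat.eq_zero_or_pos n with hn | hn
  · subst hn
    rw [etaEig_zero, etaEig_zero, etaEig_zero, etaEig_zero]
    exact ⟨rfl, rfl⟩
  · have hH : (polyEval A (lam:ℂ)).IsHermitian := polyEval_herm_of A (fun j => hA j) lam
    obtain ⟨μ, y, hy, heig, hlowmin⟩ := herm_exists_min_eig hn _ hH
    obtain ⟨ΔA, hΔeq, hΔker, hΔF, hΔ2⟩ := opt_witness A lam y hy ((μ:ℝ):ℂ) heig
    have hnormc : ‖((μ:ℝ):ℂ)‖ = |μ| := by rw [Complex.norm_real, Real.norm_eq_abs]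
    have hmemH : ΔA ∈ HermPoly := by
      intro j
      rw [hΔeq j, Matrix.conjTranspose_smul, vecMulVec_star_conjT y y]
      congr 1
      simp only [RCLike.star_def, map_neg, _root_.map_mul, Complex.conj_ofReal]
    have hfeas : ∀ x, star x ⬝ᵥ x = 1 → ∃ ΔB ∈ (HermPoly :
        Set (Fin (m+1) → Matrix (Fin n) (Fin n) ℂ)),
        (polyEval A (lam:ℂ) + polyEval ΔB (lam:ℂ)) *ᵥ x = 0 := by
      intro x hx
      have hc : (starRingEnd ℂ) (star x ⬝ᵥ (polyEval A (lam:ℂ) *ᵥ x))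
          = -(((-1:ℝ)):ℂ) * (star x ⬝ᵥ (polyEval A (lam:ℂ) *ᵥ x)) := by
        rw [conj_quadForm, hH]
        push_cast
        ring
      obtain ⟨ΔB, hBconj, hBker⟩ := feas_witness A lam (-1) (Or.inr rfl) x hx hc
      refine ⟨ΔB, fun j => ?_, hBker⟩
      have := hBconj j
      rwa [show (-(((-1:ℝ)):ℂ)) = 1 by norm_num, one_smul] at this
    have hlow : ∀ x, |μ| * vecNorm x ≤ vecNorm (polyEval A (lam:ℂ) *ᵥ x) := hlowmin
    constructor
    · exact master A lam HermPoly polyNormF polyNormF_nonneg (bound_F lam) |μ| hlow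
        ⟨y, hy, ΔA, hmemH, hΔker, by rwa [hnormc] at hΔF⟩ hfeas
    · exact master A lam HermPoly polyNorm2 polyNorm2_nonneg (bound_2 lam) |μ| hlow
        ⟨y, hy, ΔA, hmemH, hΔker, by rwa [hnormc] at hΔ2⟩ hfeas

lemma skew_main {n m : ℕ} (A : Fin (m+1) → Matrix (Fin n) (Fin n) ℂ)
    (hA : A ∈ SkewHermPoly) (lam : ℝ) :
    etaEig polyNormF SkewHermPoly (lam:ℂ) A = etaEig polyNormF Set.univ (lam:ℂ) A ∧
    etaEig polyNorm2 SkewHermPoly (lam:ℂ) A = etaEig polyNorm2 Set.univ (lam:ℂ) A := by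
  rcases Nat.eq_zero_or_pos n with hn | hn
  · subst hn
    rw [etaEig_zero, etaEig_zero, etaEig_zero, etaEig_zero]
    exact ⟨rfl, rfl⟩
  · have hskew : (polyEval A (lam:ℂ))ᴴ = -polyEval A (lam:ℂ) :=
      polyEval_skew_of A (fun j => hA j) lam
    set K : Matrix (Fin n) (Fin n) ℂ := Complex.I • polyEval A (lam:ℂ) with hKdef
    have hK : K.IsHermitian := by
      show Kᴴ = K
      rw [hKdef, Matrix.conjTranspose_smul, hskew, RCLike.star_def, Complex.conj_I, smul_neg,
        neg_smul, neg_neg]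
    obtain ⟨μ, y, hy, hKeig, hKlow⟩ := herm_exists_min_eig hn K hK
    have heig : polyEval A (lam:ℂ) *ᵥ y = ((-Complex.I) * ((μ:ℝ):ℂ)) • y := by
      rw [hKdef, Matrix.smul_mulVec] at hKeig
      have h2 := congrArg (fun v => (-Complex.I) • v) hKeig
      simp only [smul_smul, neg_mul, Complex.I_mul_I, neg_neg, one_smul] at h2
      rw [h2, neg_mul]
    obtain ⟨ΔA, hΔeq, hΔker, hΔF, hΔ2⟩ := opt_witness A lam y hy ((-Complex.I) * ((μ:ℝ):ℂ)) heig
    have hnormc : ‖(-Complex.I) * ((μ:ℝ):ℂ)‖ = |μ| := by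
      rw [norm_mul, norm_neg, Complex.norm_I, one_mul, Complex.norm_real, Real.norm_eq_abs]
    have hmemS : ΔA ∈ SkewHermPoly := by
      intro j
      rw [hΔeq j, Matrix.conjTranspose_smul, vecMulVec_star_conjT y y, ← neg_smul]
      congr 1
      simp only [RCLike.star_def, map_neg, _root_.map_mul, Complex.conj_ofReal, Complex.conj_I]
      ring
    have hfeas : ∀ x, star x ⬝ᵥ x = 1 → ∃ ΔB ∈ (SkewHermPoly :
        Set (Fin (m+1) → Matrix (Fin n) (Fin n) ℂ)),
        (polyEval A (lam:ℂ) + polyEval ΔB (lam:ℂ)) *ᵥ x = 0 := by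
      intro x hx
      have hc : (starRingEnd ℂ) (star x ⬝ᵥ (polyEval A (lam:ℂ) *ᵥ x))
          = -(((1:ℝ)):ℂ) * (star x ⬝ᵥ (polyEval A (lam:ℂ) *ᵥ x)) := by
        rw [conj_quadForm, hskew, Matrix.neg_mulVec, dotProduct_neg]
        push_cast
        ring
      obtain ⟨ΔB, hBconj, hBker⟩ := feas_witness A lam 1 (Or.inl rfl) x hx hc
      refine ⟨ΔB, fun j => ?_, hBker⟩
      have := hBconj j
      rwa [show (-(((1:ℝ)):ℂ)) = -1 by norm_num, neg_one_smul] at this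
    have hlow : ∀ x, |μ| * vecNorm x ≤ vecNorm (polyEval A (lam:ℂ) *ᵥ x) := by
      intro x
      have h1 := hKlow x
      rwa [hKdef, Matrix.smul_mulVec, vecNorm_smul, Complex.norm_I, one_mul] at h1
    constructor
    · exact master A lam SkewHermPoly polyNormF polyNormF_nonneg (bound_F lam) |μ| hlow
        ⟨y, hy, ΔA, hmemS, hΔker, by rwa [hnormc] at hΔF⟩ hfeas
    · exact master A lam SkewHermPoly polyNorm2 polyNorm2_nonneg (bound_2 lam) |μ| hlow
        ⟨y, hy, ΔA, hmemS, hΔker, by rwa [hnormc] at hΔ2⟩ hfeas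


/-- For a regular Hermitian (resp. skew-Hermitian) matrix polynomial, the
structured eigenvalue backward error at a real point equals the unstructured one, for both
the Frobenius and the spectral norm; consequently the structured and unstructured
ε-pseudospectra coincide on the real axis. -/
theorem hermitian_pseudospectra_real {n m : ℕ}
    (A : Fin (m+1) → Matrix (Fin n) (Fin n) ℂ) (hreg : Regular A) :
    (A ∈ HermPoly →
      (∀ lam : ℝ,
        etaEig polyNormF HermPoly (lam : ℂ) A = etaEig polyNormF Set.univ (lam : ℂ) A ∧
        etaEig polyNorm2 HermPoly (lam : ℂ) A = etaEig polyNorm2 Set.univ (lam : ℂ) A) ∧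
      (∀ ε : ℝ, 0 < ε →
        {z : ℂ | z.im = 0 ∧ etaEig polyNormF HermPoly z A ≤ ε}
          = {z : ℂ | z.im = 0 ∧ etaEig polyNormF Set.univ z A ≤ ε} ∧
        {z : ℂ | z.im = 0 ∧ etaEig polyNorm2 HermPoly z A ≤ ε}
          = {z : ℂ | z.im = 0 ∧ etaEig polyNorm2 Set.univ z A ≤ ε})) ∧
    (A ∈ SkewHermPoly →
      (∀ lam : ℝ,
        etaEig polyNormF SkewHermPoly (lam : ℂ) A
          = etaEig polyNormF Set.univ (lam : ℂ) A ∧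
        etaEig polyNorm2 SkewHermPoly (lam : ℂ) A
          = etaEig polyNorm2 Set.univ (lam : ℂ) A) ∧
      (∀ ε : ℝ, 0 < ε →
        {z : ℂ | z.im = 0 ∧ etaEig polyNormF SkewHermPoly z A ≤ ε}
          = {z : ℂ | z.im = 0 ∧ etaEig polyNormF Set.univ z A ≤ ε} ∧
        {z : ℂ | z.im = 0 ∧ etaEig polyNorm2 SkewHermPoly z A ≤ ε}
          = {z : ℂ | z.im = 0 ∧ etaEig polyNorm2 Set.univ z A ≤ ε})) := by
  constructor
  · intro hA
    refine ⟨herm_main A hA, fun ε _ => ⟨?_, ?_⟩⟩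
    · ext z
      simp only [Set.mem_setOf_eq, and_congr_right_iff]
      intro him
      have hz : z = ((z.re : ℝ) : ℂ) := by apply Complex.ext <;> simp [him]
      rw [hz, (herm_main A hA z.re).1]
    · ext z
      simp only [Set.mem_setOf_eq, and_congr_right_iff]
      intro him
      have hz : z = ((z.re : ℝ) : ℂ) := by apply Complex.ext <;> simp [him]
      rw [hz, (herm_main A hA z.re).2]
  · intro hA
    refine ⟨skew_main A hA, fun ε _ => ⟨?_, ?_⟩⟩
    · ext z
      simp only [Set.mem_setOf_eq, and_congr_right_iff]
      intro him
      have hz : z = ((z.re : ℝ) : ℂ) := by apply Complex.ext <;> simp [him]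
      rw [hz, (skew_main A hA z.re).1]
    · ext z
      simp only [Set.mem_setOf_eq, and_congr_right_iff]
      intro him
      have hz : z = ((z.re : ℝ) : ℂ) := by apply Complex.ext <;> simp [him]
      rw [hz, (skew_main A hA z.re).2]
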